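/- Golay-Davis-Jedwab sequences are complementary: for m ≥ 1, H = 2^q, a permutation π of {1,...,m}, coefficients k_0, k_1, ..., k_m ∈ ℤ_H, the length-2^m sequence c with c_x = ω^{f(x)} where ω = e^{2πi/H}, f(x) = (H/2) Σ_{n=1}^{m-1} x_{π(n)} x_{π(n+1)} + Σ_{n=1}^m k_n x_{π(n)} + k_0, and (x_1,...,x_m) the binary digits of x (most significant first), satisfies sup_{|z|=1} |p_c(z)|² ≤ 2^{m+1}; equivalently its PAPR is at most 2. -/

import Mathlib

def bitZ {M : ℕ} (x : Fin M → Bool) (j : Fin M) : ℤ := if x j then 1 else 0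

noncomputable def ome (q : ℕ) (a : ℤ) : ℂ :=
  Complex.exp (2 * Real.pi * Complex.I * (a : ℂ) / (2 : ℂ) ^ q)

lemma ome_add (q : ℕ) (a b : ℤ) : ome q (a + b) = ome q a * ome q b := by
  unfold ome
  rw [← Complex.exp_add]
  congr 1
  push_cast
  ring

lemma ome_abs (q : ℕ) (a : ℤ) : ‖ome q a‖ = 1 := by
  have h : ome q a = Complex.exp ((2 * Real.pi * a / 2 ^ q : ℝ) * Complex.I) := by
    unfold ome; congr 1; push_cast; ring
  rw [h, Complex.norm_exp_ofReal_mul_I]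

lemma ome_half (q : ℕ) (hq : 1 ≤ q) : ome q (2 ^ (q - 1)) = -1 := by
  have hpow : (2 : ℂ) ^ q = 2 * 2 ^ (q - 1) := by
    rw [← pow_succ']
    congr 1
    omega
  have h2 : ((2 : ℂ) ^ (q - 1)) ≠ 0 := pow_ne_zero _ two_ne_zero
  have harg : 2 * (Real.pi : ℂ) * Complex.I * ((2 ^ (q - 1) : ℤ) : ℂ) / (2 : ℂ) ^ q
      = Real.pi * Complex.I := by
    push_cast
    rw [hpow]
    field_simp
  rw [ome, harg, Complex.exp_pi_mul_I]

lemma ome_add_half (q : ℕ) (hq : 1 ≤ q) (a : ℤ) : ome q (a + 2 ^ (q - 1)) = -ome q a := by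
  rw [ome_add, ome_half q hq]; ring

/-- The GDJ polynomial with arbitrary exponent weights `e`. -/
noncomputable def gdj (q M : ℕ) (e : Fin (M + 1) → ℕ) (k : Fin (M + 1) → ℤ) (k0 : ℤ)
    (z : ℂ) : ℂ :=
  ∑ y : Fin (M + 1) → Bool,
    ome q ((2 ^ (q - 1) : ℤ) * (∑ i : Fin M, bitZ y i.castSucc * bitZ y i.succ)
        + (∑ n : Fin (M + 1), k n * bitZ y n) + k0)
      * z ^ (∑ n : Fin (M + 1), (if y n then 1 else 0) * e n)

/-- companion coefficient vector: first linear coefficient shifted by H/2 -/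
def comp (q M : ℕ) (k : Fin (M + 1) → ℤ) : Fin (M + 1) → ℤ :=
  fun n => k n + if n = 0 then 2 ^ (q - 1) else 0

lemma sum_pi_succ {n : ℕ} {α : Type*} [AddCommMonoid α] (f : (Fin (n + 1) → Bool) → α) :
    ∑ y : Fin (n + 1) → Bool, f y
      = ∑ t : Fin n → Bool, f (Fin.cons false t) + ∑ t : Fin n → Bool, f (Fin.cons true t) := by
  rw [← Equiv.sum_comp (Fin.consEquiv (fun _ : Fin (n + 1) => Bool)) f, Fintype.sum_prod_type,
    Fintype.sum_bool, add_comm]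
  rfl

set_option maxHeartbeats 2000000 in
lemma gdj_split (q M : ℕ) (e : Fin (M + 2) → ℕ) (k : Fin (M + 2) → ℤ) (k0 : ℤ) (z : ℂ) :
    gdj q (M + 1) e k k0 z
      = gdj q M (e ∘ Fin.succ) (k ∘ Fin.succ) k0 z
        + z ^ (e 0) * (ome q (k 0) * gdj q M (e ∘ Fin.succ) (comp q M (k ∘ Fin.succ)) k0 z) := by
  unfold gdj
  rw [sum_pi_succ]
  congr 1
  · -- b = false branch equals first gdj
    apply Finset.sum_congr rfl
    intro t _
    simp only [Fin.consEquiv_apply, Fin.sum_univ_succ, bitZ, Fin.castSucc_zero, Fin.cons_zero,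
      Fin.cons_succ, ← Fin.succ_castSucc, Function.comp_apply]
    norm_num
  · -- b = true branch
    rw [Finset.mul_sum, Finset.mul_sum]
    apply Finset.sum_congr rfl
    intro t _
    simp only [Fin.consEquiv_apply, Fin.sum_univ_succ, bitZ, comp, Fin.castSucc_zero,
      Fin.cons_zero, Fin.cons_succ, ← Fin.succ_castSucc, Function.comp_apply, Fin.succ_ne_zero,
      if_false, add_zero, ite_false]
    norm_num
    set Q := ∑ x : Fin M, (if t x.succ = true then if t x.castSucc = true then (1:ℤ) else 0 else 0) with hQ
    set L := ∑ x : Fin M, (if t x.succ = true then k x.succ.succ else (0:ℤ)) with hL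
    set P := ∑ x : Fin M, (if t x.succ = true then e x.succ.succ else 0) with hP
    by_cases ht : t 0 = true <;> simp only [ht, if_true, if_false]
    · rw [show 2 ^ (q - 1) * (1 + Q) + (k 0 + (k 1 + L)) + k0
          = k 0 + (2 ^ (q - 1) * Q + (k 1 + 2 ^ (q - 1) + L) + k0) from by ring, ome_add, pow_add]
      ring
    · norm_num
      rw [show 2 ^ (q - 1) * Q + (k 0 + L) + k0 = k 0 + (2 ^ (q - 1) * Q + L + k0) from by ring,
        ome_add, pow_add]
      ring

lemma para (a b w : ℂ) (hw : ‖w‖ = 1) :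
    ‖a + w * b‖ ^ 2 + ‖a - w * b‖ ^ 2
      = 2 * (‖a‖ ^ 2 + ‖b‖ ^ 2) := by
  have h := parallelogram_law_with_norm ℂ a (w * b)
  have hw' : ‖w‖ = 1 := hw
  simp only [norm_mul, hw', one_mul] at h
  simpa [pow_two] using h

lemma gdj_key (q : ℕ) (hq : 1 ≤ q) (z : ℂ) (hz : ‖z‖ = 1) :
    ∀ (M : ℕ) (e : Fin (M + 1) → ℕ) (k : Fin (M + 1) → ℤ) (k0 : ℤ),
      ‖gdj q M e k k0 z‖ ^ 2 + ‖gdj q M e (comp q M k) k0 z‖ ^ 2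
        = 2 ^ (M + 2) := by
  intro M
  induction M with
  | zero =>
    intro e k k0
    have h1 : gdj q 0 e k k0 z = ome q k0 + (z ^ (e 0) * ome q (k 0)) * ome q k0 := by
      unfold gdj
      rw [sum_pi_succ]
      simp [bitZ, ome_add]
      ring
    have h2 : gdj q 0 e (comp q 0 k) k0 z
        = ome q k0 - (z ^ (e 0) * ome q (k 0)) * ome q k0 := by
      unfold gdj
      rw [sum_pi_succ]
      simp [bitZ, comp, ome_add, ome_half q hq]
      ring
    rw [h1, h2, para _ _ _ (by simp [map_pow, hz, ome_abs]), ome_abs]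
    norm_num
  | succ M ih =>
    intro e k k0
    have hs1 := gdj_split q M e k k0 z
    have hs2 := gdj_split q M e (comp q (M + 1) k) k0 z
    have hc1 : (comp q (M + 1) k) ∘ Fin.succ = k ∘ Fin.succ := by
      funext n; simp [comp, Fin.succ_ne_zero]
    have hc0 : comp q (M + 1) k 0 = k 0 + 2 ^ (q - 1) := by simp [comp]
    rw [hc1, hc0, ome_add_half q hq] at hs2
    set A := gdj q M (e ∘ Fin.succ) (k ∘ Fin.succ) k0 z with hA
    set B := gdj q M (e ∘ Fin.succ) (comp q M (k ∘ Fin.succ)) k0 z with hB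
    have e1 : A + z ^ e 0 * (ome q (k 0) * B) = A + (z ^ e 0 * ome q (k 0)) * B := by ring
    have e2 : A + z ^ e 0 * (-ome q (k 0) * B) = A - (z ^ e 0 * ome q (k 0)) * B := by ring
    rw [hs1, hs2, e1, e2, para A B _ (by simp [map_pow, hz, ome_abs]),
      ih (e ∘ Fin.succ) (k ∘ Fin.succ) k0]
    ring

theorem stmt8 (m q : ℕ) (hq : 1 ≤ q) (σ : Equiv.Perm (Fin (m + 1)))
    (k : Fin (m + 1) → ℤ) (k0 : ℤ) :
    ∀ z : ℂ, ‖z‖ = 1 →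
      ‖(∑ x : Fin (m + 1) → Bool,
          Complex.exp (2 * Real.pi * Complex.I *
              (((2 ^ (q - 1) : ℤ) *
                    (∑ i : Fin m, bitZ x (σ i.castSucc) * bitZ x (σ i.succ)) +
                  (∑ n : Fin (m + 1), k n * bitZ x (σ n)) + k0 : ℤ) : ℂ) /
              ((2 : ℂ) ^ q)) *
            z ^ (∑ j : Fin (m + 1), (if x j then 1 else 0) * 2 ^ (m - j.val)))‖ ^ 2
        ≤ 2 ^ (m + 2) := by
  intro z hz
  have hsum : (∑ x : Fin (m + 1) → Bool,
          Complex.exp (2 * Real.pi * Complex.I *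
              (((2 ^ (q - 1) : ℤ) *
                    (∑ i : Fin m, bitZ x (σ i.castSucc) * bitZ x (σ i.succ)) +
                  (∑ n : Fin (m + 1), k n * bitZ x (σ n)) + k0 : ℤ) : ℂ) /
              ((2 : ℂ) ^ q)) *
            z ^ (∑ j : Fin (m + 1), (if x j then 1 else 0) * 2 ^ (m - j.val)))
      = gdj q m (fun n => 2 ^ (m - (σ n).val)) k k0 z := by
    unfold gdj
    apply Fintype.sum_equiv (Equiv.arrowCongr σ.symm (Equiv.refl Bool))
    intro x
    simp only [Equiv.arrowCongr_apply, Equiv.refl_apply, Function.comp_apply,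
      Equiv.symm_symm, Equiv.refl_symm, bitZ, ome]
    congr 2
    rw [← Equiv.sum_comp σ (fun j => (if x j then 1 else 0) * 2 ^ (m - j.val))]
  rw [hsum]
  have key := gdj_key q hq z hz m (fun n => 2 ^ (m - (σ n).val)) k k0
  nlinarith [sq_nonneg ‖gdj q m (fun n => 2 ^ (m - (σ n).val))
    (comp q m k) k0 z‖]
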